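/- For every m ≥ 3, the graph C_m □ C_m admits a Hamilton decomposition into two Hamiltonian cycles, i.e., there exist two Hamiltonian cycles of C_m □ C_m whose edge sets are disjoint and together cover every edge of C_m □ C_m. -/

import Mathlib

open SimpleGraph

/-- The hypercube graph `Q_n` on vertex set `Fin n → Bool`:
two vertices are adjacent iff they differ in exactly one coordinate. -/
def hypercube (n : ℕ) : SimpleGraph (Fin n → Bool) where
  Adj u v := ∃ i, u i ≠ v i ∧ ∀ j, j ≠ i → u j = v j
  symm := by
    constructor
    rintro u v ⟨i, hne, hrest⟩
    exact ⟨i, hne.symm, fun j hj => (hrest j hj).symm⟩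
  loopless := by
    constructor
    rintro u ⟨i, hne, -⟩
    exact hne rfl

/-- The cycle graph `C_m` on `ZMod m`: `i` and `j` are adjacent iff
`i - j = 1` or `j - i = 1`. -/
def cycGraph (m : ℕ) : SimpleGraph (ZMod m) :=
  SimpleGraph.fromRel (fun i j => i - j = 1)

/-- The graph `C_m^{□k}` on `Fin k → ZMod m`: two vertices are adjacent iff they
differ in exactly one coordinate, and in that coordinate they differ by `±1`. -/
def torusGraph (m k : ℕ) : SimpleGraph (Fin k → ZMod m) where
  Adj u v := ∃ i, (u i ≠ v i ∧ (u i - v i = 1 ∨ v i - u i = 1)) ∧ ∀ j, j ≠ i → u j = v j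
  symm := by
    constructor
    rintro u v ⟨i, ⟨hne, hpm⟩, hrest⟩
    exact ⟨i, ⟨hne.symm, hpm.symm⟩, fun j hj => (hrest j hj).symm⟩
  loopless := by
    constructor
    rintro u ⟨i, ⟨hne, -⟩, -⟩
    exact hne rfl

private lemma torus_adj_comp (m k : ℕ) (σ : Equiv.Perm (Fin k)) {u v : Fin k → ZMod m}
    (h : (torusGraph m k).Adj u v) : (torusGraph m k).Adj (u ∘ σ) (v ∘ σ) := by
  obtain ⟨i, ⟨hne, hpm⟩, hrest⟩ := h
  refine ⟨σ.symm i, ⟨?_, ?_⟩, ?_⟩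
  · simpa using hne
  · simpa using hpm
  · intro j hj
    have : σ j ≠ i := fun hc => hj (by simp [← hc])
    simpa using hrest (σ j) this

/-- The automorphism of `C_m^{□k}` induced by a permutation `σ` of the axes,
sending a vertex `v : Fin k → ZMod m` to `v ∘ σ⁻¹`. -/
def permIso (m k : ℕ) (σ : Equiv.Perm (Fin k)) : torusGraph m k ≃g torusGraph m k where
  toEquiv := Equiv.arrowCongr σ (Equiv.refl (ZMod m))
  map_rel_iff' := by
    intro u v
    constructor
    · intro h
      have h2 := torus_adj_comp m k σ h
      have hu : (Equiv.arrowCongr σ (Equiv.refl (ZMod m)) u) ∘ σ = u := by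
        funext x; simp
      have hv : (Equiv.arrowCongr σ (Equiv.refl (ZMod m)) v) ∘ σ = v := by
        funext x; simp
      rwa [hu, hv] at h2
    · intro h
      have h2 := torus_adj_comp m k σ.symm h
      have hu : u ∘ ⇑σ.symm = Equiv.arrowCongr σ (Equiv.refl (ZMod m)) u := by
        funext x; simp
      have hv : v ∘ ⇑σ.symm = Equiv.arrowCongr σ (Equiv.refl (ZMod m)) v := by
        funext x; simp
      rwa [hu, hv] at h2

/-- A Hamilton decomposition of a simple graph `G`: a family of Hamiltonian cycles
whose edge sets are pairwise disjoint and together cover every edge of `G`. -/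
def IsHamDecomp {V : Type*} [DecidableEq V] (G : SimpleGraph V) {ι : Type*}
    (C : ι → Σ v, G.Walk v v) : Prop :=
  (∀ i, (C i).2.IsHamiltonianCycle) ∧
  (∀ i j, i ≠ j → ∀ e, e ∈ (C i).2.edges → e ∉ (C j).2.edges) ∧
  (∀ e ∈ G.edgeSet, ∃ i, e ∈ (C i).2.edges)

section HamAux

namespace HamAux

open SimpleGraph Walk

variable {V : Type*} {G : SimpleGraph V}

/-- A walk following a function `f : ℕ → V` for `n` steps. -/
def walkOf (f : ℕ → V) (hf : ∀ t, G.Adj (f t) (f (t + 1))) : (n : ℕ) → G.Walk (f 0) (f n)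
  | 0 => Walk.nil
  | n + 1 => (walkOf f hf n).concat (hf n)

lemma walkOf_support (f : ℕ → V) (hf : ∀ t, G.Adj (f t) (f (t + 1))) :
    ∀ n, (walkOf f hf n).support = (List.range (n + 1)).map f
  | 0 => by simp [walkOf, List.range_succ]
  | n + 1 => by
      rw [walkOf, Walk.support_concat, walkOf_support f hf n]
      simp [List.range_succ]

lemma walkOf_edges (f : ℕ → V) (hf : ∀ t, G.Adj (f t) (f (t + 1))) :
    ∀ n, (walkOf f hf n).edges = (List.range n).map (fun t => s(f t, f (t + 1)))
  | 0 => by simp [walkOf]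
  | n + 1 => by
      rw [walkOf, Walk.edges_concat, walkOf_edges f hf n]
      simp [List.range_succ]

lemma walkOf_length (f : ℕ → V) (hf : ∀ t, G.Adj (f t) (f (t + 1))) :
    ∀ n, (walkOf f hf n).length = n
  | 0 => by simp [walkOf]
  | n + 1 => by rw [walkOf, Walk.length_concat, walkOf_length f hf n]

lemma walkOf_isHamCycle [DecidableEq V] {n : ℕ} (hn : 3 ≤ n) (f : ℕ → V)
    (hadj : ∀ t, G.Adj (f t) (f (t + 1)))
    (hper : ∀ s t, f s = f t ↔ s % n = t % n)
    (hsurj : ∀ v, ∃ t, f t = v) (h0 : f n = f 0) :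
    ((walkOf f hadj n).copy rfl h0).IsHamiltonianCycle := by
  have hn0 : 0 < n := by omega
  have hinj : ∀ s t, s < n → t < n → f s = f t → s = t := by
    intro s t hs ht h
    have := (hper s t).1 h
    rwa [Nat.mod_eq_of_lt hs, Nat.mod_eq_of_lt ht] at this
  have htail : (walkOf f hadj n).support.tail = (List.range n).map (fun t => f (t + 1)) := by
    rw [walkOf_support, List.range_succ_eq_map]
    simp [List.map_map, Function.comp_def]
  rw [Walk.isHamiltonianCycle_iff_isCycle_and_support_count_tail_eq_one]
  constructor
  · rw [Walk.isCycle_def]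
    refine ⟨?_, ?_, ?_⟩
    · -- trail: edges are nodup
      rw [Walk.isTrail_def, Walk.edges_copy, walkOf_edges]
      refine List.Nodup.map_on ?_ (List.nodup_range (n := n))
      intro a ha b hb h
      rw [List.mem_range] at ha hb
      rw [Sym2.eq_iff] at h
      rcases h with ⟨h1, _⟩ | ⟨h1, h2⟩
      · exact hinj a b ha hb h1
      · -- f a = f (b+1), f (a+1) = f b : leads to n ∣ 2
        exfalso
        have e1 : a % n = (b + 1) % n := (hper a (b + 1)).1 h1
        have e2 : (a + 1) % n = b % n := (hper (a + 1) b).1 h2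
        have e3 : (a + 1 + 1) % n = a % n := by
          calc (a + 1 + 1) % n = ((a + 1) % n + 1) % n := (Nat.mod_add_mod (a + 1) n 1).symm
            _ = (b % n + 1) % n := by rw [e2]
            _ = (b + 1) % n := Nat.mod_add_mod b n 1
            _ = a % n := e1.symm
        have hdvd : n ∣ a + 1 + 1 - a := (Nat.modEq_iff_dvd' (by omega)).1 e3.symm
        have h2 : a + 1 + 1 - a = 2 := by omega
        rw [h2] at hdvd
        have := Nat.le_of_dvd (by norm_num) hdvd
        omega
    · -- not nil
      intro h
      have := congrArg Walk.length h
      rw [Walk.length_copy, walkOf_length] at this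
      simp at this
      omega
    · -- support tail nodup
      rw [Walk.support_copy, htail]
      refine List.Nodup.map_on ?_ (List.nodup_range (n := n))
      intro a ha b hb h
      rw [List.mem_range] at ha hb
      have := (hper (a + 1) (b + 1)).1 h
      rcases Nat.lt_or_ge (a + 1) n with h1 | h1 <;> rcases Nat.lt_or_ge (b + 1) n with h2 | h2
      · rw [Nat.mod_eq_of_lt h1, Nat.mod_eq_of_lt h2] at this; omega
      · have hb1 : b + 1 = n := by omega
        rw [Nat.mod_eq_of_lt h1, hb1, Nat.mod_self] at this; omega
      · have ha1 : a + 1 = n := by omega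
        rw [ha1, Nat.mod_self, Nat.mod_eq_of_lt h2] at this; omega
      · omega
  · -- every vertex appears exactly once in the tail
    intro v
    rw [Walk.support_copy, htail]
    have hmem : v ∈ (List.range n).map (fun t => f (t + 1)) := by
      obtain ⟨t, ht⟩ := hsurj v
      have hs : t % n < n := Nat.mod_lt _ hn0
      have hfs : f (t % n) = v := by
        rw [← ht]; exact (hper (t % n) t).2 (Nat.mod_mod_of_dvd t dvd_rfl)
      by_cases h : t % n = 0
      · refine List.mem_map.2 ⟨n - 1, List.mem_range.2 (by omega), ?_⟩
        have : n - 1 + 1 = n := by omega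
        rw [this, h0, ← hfs, h]
      · refine List.mem_map.2 ⟨t % n - 1, List.mem_range.2 (by omega), ?_⟩
        have : t % n - 1 + 1 = t % n := by omega
        rw [this, hfs]
    refine List.count_eq_one_of_mem ?_ hmem
    refine List.Nodup.map_on ?_ (List.nodup_range (n := n))
    intro a ha b hb h
    rw [List.mem_range] at ha hb
    have := (hper (a + 1) (b + 1)).1 h
    rcases Nat.lt_or_ge (a + 1) n with h1 | h1 <;> rcases Nat.lt_or_ge (b + 1) n with h2 | h2
    · rw [Nat.mod_eq_of_lt h1, Nat.mod_eq_of_lt h2] at this; omega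
    · have hb1 : b + 1 = n := by omega
      rw [Nat.mod_eq_of_lt h1, hb1, Nat.mod_self] at this; omega
    · have ha1 : a + 1 = n := by omega
      rw [ha1, Nat.mod_self, Nat.mod_eq_of_lt h2] at this; omega
    · omega

/-- The staircase function: at time `t = q*m + r` it sits at `(r - q, q)` in `ZMod m × ZMod m`. -/
def fA (m t : ℕ) : ZMod m × ZMod m :=
  ((t : ZMod m) - ((t / m : ℕ) : ZMod m), ((t / m : ℕ) : ZMod m))

variable {m : ℕ}

lemma fA_step (hm : 3 ≤ m) (t : ℕ) :
    ((t : ZMod m) ≠ -1 ∧ fA m (t + 1) = ((fA m t).1 + 1, (fA m t).2)) ∨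
    ((t : ZMod m) = -1 ∧ fA m (t + 1) = ((fA m t).1, (fA m t).2 + 1)) := by
  haveI : NeZero m := ⟨by omega⟩
  have hm0 : 0 < m := by omega
  have hr : t % m < m := Nat.mod_lt _ hm0
  have hcast : (t : ZMod m) = ((t % m : ℕ) : ZMod m) := (ZMod.natCast_mod t m).symm
  have hneg : ((m - 1 : ℕ) : ZMod m) = -1 := by
    have h1 : ((m : ℕ) : ZMod m) = 0 := ZMod.natCast_self m
    rw [Nat.cast_sub (by omega : 1 ≤ m), h1, Nat.cast_one, zero_sub]
  by_cases h : t % m = m - 1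
  · right
    have hd : m * (t / m) + t % m = t := Nat.div_add_mod t m
    have ht : t + 1 = m * (t / m + 1) := by
      rw [Nat.mul_succ]; omega
    have h1 : (t + 1) / m = t / m + 1 := by rw [ht, Nat.mul_div_cancel_left _ hm0]
    constructor
    · rw [hcast, h, hneg]
    · unfold fA
      rw [h1]
      push_cast
      simp only [Prod.mk.injEq]
      exact ⟨by ring, trivial⟩
  · left
    have hd : m * (t / m) + t % m = t := Nat.div_add_mod t m
    have ht : t + 1 = m * (t / m) + (t % m + 1) := by omega
    have h1 : (t + 1) / m = t / m := by
      rw [ht, Nat.mul_add_div hm0, Nat.div_eq_of_lt (show t % m + 1 < m by omega), Nat.add_zero]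
    constructor
    · rw [hcast]
      intro hc
      rw [← hneg] at hc
      have := congrArg ZMod.val hc
      rw [ZMod.val_cast_of_lt hr, ZMod.val_cast_of_lt (by omega)] at this
      omega
    · unfold fA
      rw [h1]
      push_cast
      simp only [Prod.mk.injEq]
      exact ⟨by ring, trivial⟩

lemma fA_sum (t : ℕ) : (fA m t).1 + (fA m t).2 = (t : ZMod m) := by
  simp [fA]

lemma fA_period (hm : 3 ≤ m) (a : ℕ) : fA m (a + m * m) = fA m a := by
  have hm0 : 0 < m := by omega
  have h1 : (a + m * m) / m = a / m + m := Nat.add_mul_div_left a m hm0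
  unfold fA
  rw [h1]
  push_cast [ZMod.natCast_self]
  simp only [Prod.mk.injEq]
  constructor <;> ring

lemma fA_mod (hm : 3 ≤ m) (t : ℕ) : fA m (t % (m * m)) = fA m t := by
  conv_rhs => rw [← Nat.mod_add_div t (m * m)]
  generalize t / (m * m) = k
  induction k with
  | zero => simp
  | succ k ih =>
      rw [Nat.mul_succ, ← Nat.add_assoc, fA_period hm, ih]

lemma fA_inj (hm : 3 ≤ m) {s t : ℕ} (hs : s < m * m) (ht : t < m * m)
    (h : fA m s = fA m t) : s = t := by
  haveI : NeZero m := ⟨by omega⟩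
  have hm0 : 0 < m := by omega
  have hsd : s / m < m := Nat.div_lt_of_lt_mul hs
  have htd : t / m < m := Nat.div_lt_of_lt_mul ht
  have h2 : ((s / m : ℕ) : ZMod m) = ((t / m : ℕ) : ZMod m) := congrArg Prod.snd h
  have hdiv : s / m = t / m := by
    have := congrArg ZMod.val h2
    rwa [ZMod.val_cast_of_lt hsd, ZMod.val_cast_of_lt htd] at this
  have h1 : (s : ZMod m) = (t : ZMod m) := by
    have := congrArg Prod.fst h
    simp only [fA] at this
    rw [hdiv] at this
    exact sub_left_injective this
  have hmod : s % m = t % m := (ZMod.natCast_eq_natCast_iff' s t m).1 h1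
  rw [← Nat.div_add_mod s m, ← Nat.div_add_mod t m, hdiv, hmod]

lemma fA_eq_iff (hm : 3 ≤ m) (s t : ℕ) : fA m s = fA m t ↔ s % (m * m) = t % (m * m) := by
  have hmm : 0 < m * m := by positivity
  constructor
  · intro h
    exact fA_inj hm (Nat.mod_lt _ hmm) (Nat.mod_lt _ hmm) (by rw [fA_mod hm, fA_mod hm, h])
  · intro h
    rw [← fA_mod hm s, ← fA_mod hm t, h]

lemma fA_exists (hm : 3 ≤ m) (c r : ZMod m) : ∃ t, t < m * m ∧ fA m t = (c, r) := by
  haveI : NeZero m := ⟨by omega⟩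
  have hm0 : 0 < m := by omega
  refine ⟨m * r.val + (c + r).val, ?_, ?_⟩
  · calc m * r.val + (c + r).val < m * r.val + m := by
          exact Nat.add_lt_add_left ((c + r).val_lt) _
      _ = m * (r.val + 1) := by ring
      _ ≤ m * m := Nat.mul_le_mul_left m (by have := r.val_lt; omega)
  · have hdiv : (m * r.val + (c + r).val) / m = r.val := by
      rw [Nat.mul_add_div hm0, Nat.div_eq_of_lt ((c + r).val_lt)]
      omega
    unfold fA
    rw [hdiv]
    have hv : ∀ x : ZMod m, ((x.val : ℕ) : ZMod m) = x := fun x => by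
      rw [ZMod.natCast_val, ZMod.cast_id]
    push_cast [ZMod.natCast_self, hv]
    simp only [Prod.mk.injEq]
    exact ⟨by ring, trivial⟩

lemma cyc_adj (hm : 3 ≤ m) (a : ZMod m) : (cycGraph m).Adj a (a + 1) := by
  haveI : Fact (1 < m) := ⟨by omega⟩
  rw [cycGraph, SimpleGraph.fromRel_adj]
  refine ⟨?_, Or.inr (by ring)⟩
  intro h
  have : (1 : ZMod m) = 0 := by
    have := congrArg (fun x => x - a) h
    simpa using this.symm
  exact one_ne_zero this

lemma fA_adj (hm : 3 ≤ m) (t : ℕ) :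
    (cycGraph m □ cycGraph m).Adj (fA m t) (fA m (t + 1)) := by
  rcases fA_step hm t with ⟨-, h⟩ | ⟨-, h⟩
  · rw [h, SimpleGraph.boxProd_adj]
    exact Or.inl ⟨cyc_adj hm _, rfl⟩
  · rw [h, SimpleGraph.boxProd_adj]
    exact Or.inr ⟨cyc_adj hm _, rfl⟩

/-- The transposed staircase. -/
def fB (m t : ℕ) : ZMod m × ZMod m := (fA m t).swap

lemma fB_adj (hm : 3 ≤ m) (t : ℕ) :
    (cycGraph m □ cycGraph m).Adj (fB m t) (fB m (t + 1)) := by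
  have h := fA_adj hm t
  rw [SimpleGraph.boxProd_adj] at h ⊢
  unfold fB Prod.swap
  tauto

lemma fA_mm (hm : 3 ≤ m) : fA m (m * m) = fA m 0 := by
  rw [fA_eq_iff hm]
  simp

lemma fB_mm (hm : 3 ≤ m) : fB m (m * m) = fB m 0 := by
  unfold fB; rw [fA_mm hm]

/-- The first Hamiltonian cycle. -/
def cycA (m : ℕ) (hm : 3 ≤ m) : (cycGraph m □ cycGraph m).Walk (fA m 0) (fA m 0) :=
  (walkOf (fA m) (fA_adj hm) (m * m)).copy rfl (fA_mm hm)

/-- The second Hamiltonian cycle. -/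
def cycB (m : ℕ) (hm : 3 ≤ m) : (cycGraph m □ cycGraph m).Walk (fB m 0) (fB m 0) :=
  (walkOf (fB m) (fB_adj hm) (m * m)).copy rfl (fB_mm hm)

lemma three_le_sq (hm : 3 ≤ m) : 3 ≤ m * m :=
  le_trans hm (Nat.le_mul_of_pos_left m (by omega))

lemma cycA_isHam (hm : 3 ≤ m) : (cycA m hm).IsHamiltonianCycle := by
  unfold cycA
  apply walkOf_isHamCycle (three_le_sq hm)
  · exact fun s t => fA_eq_iff hm s t
  · intro v
    obtain ⟨t, -, ht⟩ := fA_exists hm v.1 v.2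
    exact ⟨t, by rw [ht]⟩

lemma cycB_isHam (hm : 3 ≤ m) : (cycB m hm).IsHamiltonianCycle := by
  unfold cycB
  apply walkOf_isHamCycle (three_le_sq hm)
  · intro s t
    unfold fB
    rw [Prod.swap_injective.eq_iff]
    exact fA_eq_iff hm s t
  · intro v
    obtain ⟨t, -, ht⟩ := fA_exists hm v.2 v.1
    refine ⟨t, ?_⟩
    unfold fB
    rw [ht]
    simp

lemma mem_cycA_iff (hm : 3 ≤ m) (e : Sym2 (ZMod m × ZMod m)) :
    e ∈ (cycA m hm).edges ↔ ∃ t, t < m * m ∧ e = s(fA m t, fA m (t + 1)) := by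
  unfold cycA
  rw [Walk.edges_copy, walkOf_edges]
  constructor
  · intro h
    obtain ⟨t, ht, heq⟩ := List.mem_map.1 h
    exact ⟨t, List.mem_range.1 ht, heq.symm⟩
  · rintro ⟨t, ht, rfl⟩
    exact List.mem_map.2 ⟨t, List.mem_range.2 ht, rfl⟩

lemma mem_cycB_iff (hm : 3 ≤ m) (e : Sym2 (ZMod m × ZMod m)) :
    e ∈ (cycB m hm).edges ↔ ∃ t, t < m * m ∧ e = s(fB m t, fB m (t + 1)) := by
  unfold cycB
  rw [Walk.edges_copy, walkOf_edges]
  constructor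
  · intro h
    obtain ⟨t, ht, heq⟩ := List.mem_map.1 h
    exact ⟨t, List.mem_range.1 ht, heq.symm⟩
  · rintro ⟨t, ht, rfl⟩
    exact List.mem_map.2 ⟨t, List.mem_range.2 ht, rfl⟩

lemma one_ne_zero' (hm : 3 ≤ m) : (1 : ZMod m) ≠ 0 := by
  haveI : Fact (1 < m) := ⟨by omega⟩
  exact one_ne_zero

lemma two_ne_zero' (hm : 3 ≤ m) : (2 : ZMod m) ≠ 0 := by
  haveI : NeZero m := ⟨by omega⟩
  intro h
  have h2 : ((2 : ℕ) : ZMod m).val = 2 := ZMod.val_cast_of_lt (by omega)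
  rw [show ((2 : ℕ) : ZMod m) = (2 : ZMod m) by push_cast; ring, h, ZMod.val_zero] at h2
  omega

lemma edge_clash1 (h1 : (1 : ZMod m) ≠ 0) {c r r' c' : ZMod m}
    (h : s((c, r), (c + 1, r)) = s((r', c'), (r', c' + 1))) : False := by
  rw [Sym2.eq_iff] at h
  apply h1
  rcases h with ⟨ha, hb⟩ | ⟨ha, hb⟩ <;>
  · have e1 := congrArg Prod.fst ha
    have e2 := congrArg Prod.fst hb
    simp only at e1 e2
    linear_combination e2 - e1

lemma edge_clash2 (h1 : (2 : ZMod m) ≠ 0) {c r r' c' : ZMod m}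
    (hA : c + r ≠ -1) (hB : c' + r' = -1)
    (h : s((c, r), (c + 1, r)) = s((r', c'), (r' + 1, c'))) : False := by
  rw [Sym2.eq_iff] at h
  rcases h with ⟨ha, hb⟩ | ⟨ha, hb⟩
  · have e1 := congrArg Prod.fst ha
    have e2 := congrArg Prod.snd ha
    simp only at e1 e2
    exact hA (by linear_combination hB + e1 + e2)
  · have e1 := congrArg Prod.fst ha
    have e2 := congrArg Prod.fst hb
    simp only at e1 e2
    exact h1 (by linear_combination e2 - e1)

lemma edge_clash3 (h1 : (2 : ZMod m) ≠ 0) {c r r' c' : ZMod m}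
    (hA : c + r = -1) (hB : c' + r' ≠ -1)
    (h : s((c, r), (c, r + 1)) = s((r', c'), (r', c' + 1))) : False := by
  rw [Sym2.eq_iff] at h
  rcases h with ⟨ha, hb⟩ | ⟨ha, hb⟩
  · have e1 := congrArg Prod.fst ha
    have e2 := congrArg Prod.snd ha
    simp only at e1 e2
    exact hB (by linear_combination hA - e1 - e2)
  · have e1 := congrArg Prod.snd ha
    have e2 := congrArg Prod.snd hb
    simp only at e1 e2
    exact h1 (by linear_combination e2 - e1)

lemma edge_clash4 (h1 : (1 : ZMod m) ≠ 0) {c r r' c' : ZMod m}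
    (h : s((c, r), (c, r + 1)) = s((r', c'), (r' + 1, c'))) : False := by
  rw [Sym2.eq_iff] at h
  apply h1
  rcases h with ⟨ha, hb⟩ | ⟨ha, hb⟩
  · have e1 := congrArg Prod.fst ha
    have e2 := congrArg Prod.fst hb
    simp only at e1 e2
    linear_combination e1 - e2
  · have e1 := congrArg Prod.fst ha
    have e2 := congrArg Prod.fst hb
    simp only at e1 e2
    linear_combination e2 - e1

lemma disjAB (hm : 3 ≤ m) : ∀ e, e ∈ (cycA m hm).edges → e ∈ (cycB m hm).edges → False := by
  intro e heA heB
  rw [mem_cycA_iff hm] at heA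
  rw [mem_cycB_iff hm] at heB
  obtain ⟨a, ha, rfl⟩ := heA
  obtain ⟨b, hb, hEq⟩ := heB
  have hsA : (fA m a).1 + (fA m a).2 = (a : ZMod m) := fA_sum a
  have hsB : (fA m b).1 + (fA m b).2 = (b : ZMod m) := fA_sum b
  have hswap : ∀ t, fB m t = ((fA m t).2, (fA m t).1) := fun t => rfl
  rw [hswap b, hswap (b + 1)] at hEq
  rcases fA_step hm a with ⟨hs1, he1⟩ | ⟨hs1, he1⟩ <;>
    rcases fA_step hm b with ⟨hs2, he2⟩ | ⟨hs2, he2⟩ <;>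
      rw [he1, he2] at hEq
  · exact edge_clash1 (one_ne_zero' hm) hEq
  · exact edge_clash2 (two_ne_zero' hm)
      (fun hc => hs1 (by first | linear_combination hc | linear_combination hc - hsA))
      (by first | linear_combination hs2 | linear_combination hsB + hs2) hEq
  · exact edge_clash3 (two_ne_zero' hm)
      (by first | linear_combination hs1 | linear_combination hsA + hs1)
      (fun hc => hs2 (by first | linear_combination hc | linear_combination hc - hsB)) hEq
  · exact edge_clash4 (one_ne_zero' hm) hEq

lemma memH (hm : 3 ≤ m) (c r : ZMod m) :
    s((c, r), (c + 1, r)) ∈ (cycA m hm).edges ∨ s((c, r), (c + 1, r)) ∈ (cycB m hm).edges := by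
  by_cases hsum : c + r = -1
  · right
    obtain ⟨b, hb, hfb⟩ := fA_exists hm r c
    have hsb : (b : ZMod m) = -1 := by
      rw [← fA_sum b, hfb]
      simpa [add_comm] using hsum
    rcases fA_step hm b with ⟨hs, -⟩ | ⟨-, he⟩
    · exact absurd hsb hs
    · rw [mem_cycB_iff hm]
      refine ⟨b, hb, ?_⟩
      rw [show fB m b = ((fA m b).2, (fA m b).1) from rfl,
        show fB m (b + 1) = ((fA m (b + 1)).2, (fA m (b + 1)).1) from rfl, he, hfb]
  · left
    obtain ⟨a, ha, hfa⟩ := fA_exists hm c r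
    have hsa : (a : ZMod m) ≠ -1 := by
      rw [← fA_sum a, hfa]
      simpa using hsum
    rcases fA_step hm a with ⟨-, he⟩ | ⟨hs, -⟩
    · rw [mem_cycA_iff hm]
      refine ⟨a, ha, ?_⟩
      rw [he, hfa]
    · exact absurd hs hsa

lemma memV (hm : 3 ≤ m) (c r : ZMod m) :
    s((c, r), (c, r + 1)) ∈ (cycA m hm).edges ∨ s((c, r), (c, r + 1)) ∈ (cycB m hm).edges := by
  by_cases hsum : c + r = -1
  · left
    obtain ⟨a, ha, hfa⟩ := fA_exists hm c r
    have hsa : (a : ZMod m) = -1 := by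
      rw [← fA_sum a, hfa]
      exact hsum
    rcases fA_step hm a with ⟨hs, -⟩ | ⟨-, he⟩
    · exact absurd hsa hs
    · rw [mem_cycA_iff hm]
      refine ⟨a, ha, ?_⟩
      rw [he, hfa]
  · right
    obtain ⟨b, hb, hfb⟩ := fA_exists hm r c
    have hsb : (b : ZMod m) ≠ -1 := by
      rw [← fA_sum b, hfb]
      intro hc
      exact hsum (by linear_combination hc)
    rcases fA_step hm b with ⟨-, he⟩ | ⟨hs, -⟩
    · rw [mem_cycB_iff hm]
      refine ⟨b, hb, ?_⟩
      rw [show fB m b = ((fA m b).2, (fA m b).1) from rfl,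
        show fB m (b + 1) = ((fA m (b + 1)).2, (fA m (b + 1)).1) from rfl, he, hfb]
    · exact absurd hs hsb

lemma cover (hm : 3 ≤ m) : ∀ e ∈ (cycGraph m □ cycGraph m).edgeSet,
    e ∈ (cycA m hm).edges ∨ e ∈ (cycB m hm).edges := by
  intro e he
  induction e using Sym2.ind with
  | _ x y =>
    rw [SimpleGraph.mem_edgeSet, SimpleGraph.boxProd_adj] at he
    obtain ⟨x1, x2⟩ := x
    obtain ⟨y1, y2⟩ := y
    rcases he with ⟨hadj, h2⟩ | ⟨hadj, h2⟩
    · rw [cycGraph, SimpleGraph.fromRel_adj] at hadj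
      simp only at h2
      subst h2
      obtain ⟨-, hd | hd⟩ := hadj
      · have hx : x1 = y1 + 1 := by linear_combination hd
        rw [hx, Sym2.eq_swap]
        exact memH hm y1 x2
      · have hy : y1 = x1 + 1 := by linear_combination hd
        rw [hy]
        exact memH hm x1 x2
    · rw [cycGraph, SimpleGraph.fromRel_adj] at hadj
      simp only at h2
      subst h2
      obtain ⟨-, hd | hd⟩ := hadj
      · have hx : x2 = y2 + 1 := by linear_combination hd
        rw [hx, Sym2.eq_swap]
        exact memV hm x1 y2
      · have hy : y2 = x2 + 1 := by linear_combination hd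
        rw [hy]
        exact memV hm x1 x2

end HamAux

end HamAux

open HamAux

/-- For every `m ≥ 3`, the graph `C_m □ C_m` admits a Hamilton decomposition into
two Hamiltonian cycles. -/
theorem cycle_boxProd_hamDecomp (m : ℕ) (hm : 3 ≤ m) :
    ∃ C : Fin 2 → Σ v, (cycGraph m □ cycGraph m).Walk v v,
      IsHamDecomp (cycGraph m □ cycGraph m) C := by
  refine ⟨![⟨_, cycA m hm⟩, ⟨_, cycB m hm⟩], ?_, ?_, ?_⟩
  · intro i
    fin_cases i
    · exact cycA_isHam hm
    · exact cycB_isHam hm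
  · intro i j hij e hei hej
    fin_cases i <;> fin_cases j
    · exact absurd rfl hij
    · exact disjAB hm e hei hej
    · exact disjAB hm e hej hei
    · exact absurd rfl hij
  · intro e he
    rcases cover hm e he with h | h
    · exact ⟨0, h⟩
    · exact ⟨1, h⟩
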